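/- The function M satisfies (1/μ)·M′(0) = π₂·(β⁶(1+ρ)² + β⁵·3(1+ρ)³ + β⁴(1+ρ)²(3ρ²+7ρ+3) + β³(1+ρ)(ρ²+3ρ+1)² + β²(ρ⁵+6ρ⁴+12ρ³+6ρ²+ρ) + β·ρ²(1+ρ)(ρ²+5ρ+1) + ρ³(1+ρ)²) / (μρ²β²(1+β)(1+ρ+β)²), and (1/μ²)·M″(0) = 2π₂·(β⁸(1+ρ)(ρ²+ρ+1) + β⁷·4(1+ρ)²(ρ²+ρ+1) + β⁶(1+ρ)(ρ²+ρ+1)(2ρ+3)(3ρ+2) + β⁵(ρ²+ρ+1)(4ρ⁴+19ρ³+31ρ²+19ρ+4) + β⁴(1+ρ)(ρ²+3ρ+1)(ρ⁴+5ρ³+7ρ²+5ρ+1) + β³·ρ(ρ⁶+8ρ⁵+25ρ⁴+39ρ³+25ρ²+8ρ+1) + β²·ρ²(1+ρ)(ρ⁴+7ρ³+18ρ²+7ρ+1) + β·ρ³(1+ρ)²(ρ²+6ρ+1) + ρ⁴(1+ρ)³) / (μ²ρ³β³(1+β)(1+ρ+β)³). -/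

import Mathlib

private lemma hP4 (a b c d e x : ℝ) :
    HasDerivAt (fun y : ℝ => a*y^4 + b*y^3 + c*y^2 + d*y + e)
      (4*a*x^3 + 3*b*x^2 + 2*c*x + d) x := by
  have h4 : HasDerivAt (fun y : ℝ => y^4) (4*x^3) x := by simpa using hasDerivAt_pow 4 x
  have h3 : HasDerivAt (fun y : ℝ => y^3) (3*x^2) x := by simpa using hasDerivAt_pow 3 x
  have h2 : HasDerivAt (fun y : ℝ => y^2) (2*x) x := by simpa using hasDerivAt_pow 2 x
  have h1 : HasDerivAt (fun y : ℝ => y) 1 x := hasDerivAt_id x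
  have := ((((h4.const_mul a).add (h3.const_mul b)).add (h2.const_mul c)).add
      (h1.const_mul d)).add_const e
  exact this.congr_deriv (by ring)

private lemma hP3 (b c d e x : ℝ) :
    HasDerivAt (fun y : ℝ => b*y^3 + c*y^2 + d*y + e) (3*b*x^2 + 2*c*x + d) x := by
  have := hP4 0 b c d e x
  simp only [zero_mul, zero_add, mul_zero] at this
  convert this using 1
  all_goals ring

private lemma hP2 (c d e x : ℝ) :
    HasDerivAt (fun y : ℝ => c*y^2 + d*y + e) (2*c*x + d) x := by
  have := hP3 0 c d e x
  simp only [zero_mul, zero_add, mul_zero] at this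
  convert this using 1
  all_goals ring

private lemma hP1 (d e x : ℝ) :
    HasDerivAt (fun y : ℝ => d*y + e) d x := by
  have := hP2 0 d e x
  simp only [zero_mul, zero_add, mul_zero] at this
  convert this using 1
  all_goals ring

/-- First and second moments of AoI for LCFS-PS with B = 2 when the transmitter
can harvest energy anytime, obtained from the MGF. -/
theorem stmt_16 (rho beta mu : ℝ) (hrho : 0 < rho) (hbeta : 0 < beta) (hmu : 0 < mu)
    (gamma' pi2 pi1 : ℝ)
    (hgamma' : gamma' = beta / rho ^ 2 * (1 + rho) * (rho + beta * (1 + rho + beta)))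
    (hpi2 : pi2 = (beta ^ 3 * rho + beta ^ 2 * rho * (1 + rho) + beta * rho ^ 2)
      / (beta ^ 4 * (1 + rho) + beta ^ 3 * (2 * rho ^ 2 + 3 * rho + 1)
        + beta ^ 2 * (rho ^ 3 + 3 * rho ^ 2 + 2 * rho)
        + beta * (rho ^ 3 + 2 * rho ^ 2) + rho ^ 3))
    (hpi1 : pi1 = rho * pi2 / (beta * (1 + beta)))
    (M : ℝ → ℝ)
    (hM : ∀ x, M x = rho * pi1 * (x ^ 2 * gamma' - x * gamma' * (1 + rho + 2 * beta)
        + (1 + gamma') * beta * (1 + rho + beta))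
      / ((1 - x) * (rho - x) * (beta - x) * (1 + rho + beta - x))) :
    (1 / mu) * deriv M 0 =
      pi2 * (beta ^ 6 * (1 + rho) ^ 2
          + beta ^ 5 * (3 * (1 + rho) ^ 3)
          + beta ^ 4 * ((1 + rho) ^ 2 * (3 * rho ^ 2 + 7 * rho + 3))
          + beta ^ 3 * ((1 + rho) * (rho ^ 2 + 3 * rho + 1) ^ 2)
          + beta ^ 2 * (rho ^ 5 + 6 * rho ^ 4 + 12 * rho ^ 3 + 6 * rho ^ 2 + rho)
          + beta * (rho ^ 2 * (1 + rho) * (rho ^ 2 + 5 * rho + 1))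
          + rho ^ 3 * (1 + rho) ^ 2)
        / (mu * rho ^ 2 * beta ^ 2 * (1 + beta) * (1 + rho + beta) ^ 2) ∧
    (1 / mu ^ 2) * deriv (deriv M) 0 =
      2 * pi2 * (beta ^ 8 * ((1 + rho) * (rho ^ 2 + rho + 1))
          + beta ^ 7 * (4 * (1 + rho) ^ 2 * (rho ^ 2 + rho + 1))
          + beta ^ 6 * ((1 + rho) * (rho ^ 2 + rho + 1) * (2 * rho + 3) * (3 * rho + 2))
          + beta ^ 5 * ((rho ^ 2 + rho + 1)
            * (4 * rho ^ 4 + 19 * rho ^ 3 + 31 * rho ^ 2 + 19 * rho + 4))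
          + beta ^ 4 * ((1 + rho) * (rho ^ 2 + 3 * rho + 1)
            * (rho ^ 4 + 5 * rho ^ 3 + 7 * rho ^ 2 + 5 * rho + 1))
          + beta ^ 3 * (rho * (rho ^ 6 + 8 * rho ^ 5 + 25 * rho ^ 4 + 39 * rho ^ 3
            + 25 * rho ^ 2 + 8 * rho + 1))
          + beta ^ 2 * (rho ^ 2 * (1 + rho)
            * (rho ^ 4 + 7 * rho ^ 3 + 18 * rho ^ 2 + 7 * rho + 1))
          + beta * (rho ^ 3 * (1 + rho) ^ 2 * (rho ^ 2 + 6 * rho + 1))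
          + rho ^ 4 * (1 + rho) ^ 3)
        / (mu ^ 2 * rho ^ 3 * beta ^ 3 * (1 + beta) * (1 + rho + beta) ^ 3) := by
  have hr0 : rho ≠ 0 := hrho.ne'
  have hb0 : beta ≠ 0 := hbeta.ne'
  have hm0 : mu ≠ 0 := hmu.ne'
  have h1b : (1:ℝ) + beta ≠ 0 := by positivity
  have hs0 : (1:ℝ) + rho + beta ≠ 0 := by positivity
  -- abbreviations
  set s : ℝ := 1 + rho + beta with hs
  set c0 : ℝ := rho * pi1 with hc0
  -- polynomial coefficients of the denominator D(x) = (1-x)(rho-x)(beta-x)(s-x)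
  set e1 : ℝ := 1 + rho + beta + s with he1
  set e2 : ℝ := rho + beta + s + rho*beta + rho*s + beta*s with he2
  set e3 : ℝ := rho*beta + rho*s + beta*s + rho*beta*s with he3
  set e4 : ℝ := rho*beta*s with he4
  set Df : ℝ → ℝ := fun y => 1*y^4 + (-e1)*y^3 + e2*y^2 + (-e3)*y + e4 with hDfdef
  set Nf : ℝ → ℝ := fun y => gamma'*y^2 + (-(gamma'*(1+rho+2*beta)))*y + (1+gamma')*beta*s
    with hNfdef
  have hDfac : ∀ y : ℝ, (1 - y) * (rho - y) * (beta - y) * (s - y) = Df y := by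
    intro y
    simp only [hDfdef, he1, he2, he3, he4]
    ring
  have hMeq : M = fun y => c0 * Nf y / Df y := by
    funext y
    rw [hM, ← hDfac y, hc0, hNfdef]
    ring_nf
  have hspos : (0:ℝ) < s := by rw [hs]; positivity
  have hD0 : Df 0 ≠ 0 := by
    have h : Df 0 = rho*beta*s := by simp [hDfdef, he4]
    rw [h]
    positivity
  -- derivative pieces
  have hDd : ∀ x : ℝ, HasDerivAt Df (4*1*x^3 + 3*(-e1)*x^2 + 2*e2*x + (-e3)) x :=
    fun x => hP4 1 (-e1) e2 (-e3) e4 x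
  have hNd : ∀ x : ℝ, HasDerivAt Nf (2*gamma'*x + (-(gamma'*(1+rho+2*beta)))) x :=
    fun x => hP2 gamma' (-(gamma'*(1+rho+2*beta))) ((1+gamma')*beta*s) x
  -- the derivative function g on the set where Df ≠ 0
  set g : ℝ → ℝ := fun x =>
    (c0 * (2*gamma'*x + (-(gamma'*(1+rho+2*beta)))) * Df x
      - c0 * Nf x * (4*1*x^3 + 3*(-e1)*x^2 + 2*e2*x + (-e3))) / (Df x)^2 with hgdef
  have hMg : ∀ x : ℝ, Df x ≠ 0 → deriv M x = g x := by
    intro x hx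
    rw [hMeq]
    have h := ((hNd x).const_mul c0).div (hDd x) hx
    exact h.deriv
  -- part 1 : deriv M 0
  have hd1 : deriv M 0 = g 0 := hMg 0 hD0
  -- deriv M agrees with g near 0
  have hEv : ∀ᶠ x in nhds (0:ℝ), Df x ≠ 0 := (hDd 0).continuousAt.eventually_ne hD0
  have hEvEq : deriv M =ᶠ[nhds (0:ℝ)] g := hEv.mono fun x hx => hMg x hx
  have hd2eq : deriv (deriv M) 0 = deriv g 0 := hEvEq.deriv_eq
  -- differentiate g at 0
  have hF : HasDerivAt (fun x => c0 * (2*gamma'*x + (-(gamma'*(1+rho+2*beta)))) * Df x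
      - c0 * Nf x * (4*1*x^3 + 3*(-e1)*x^2 + 2*e2*x + (-e3)))
      ((c0 * (2*gamma')) * Df 0 + (c0 * (2*gamma'*0 + (-(gamma'*(1+rho+2*beta))))) *
          (4*1*0^3 + 3*(-e1)*0^2 + 2*e2*0 + (-e3))
        - ((c0 * (2*gamma'*0 + (-(gamma'*(1+rho+2*beta))))) *
            (4*1*0^3 + 3*(-e1)*0^2 + 2*e2*0 + (-e3))
          + (c0 * Nf 0) * (3*(4*1)*0^2 + 2*(3*(-e1))*0 + 2*e2))) 0 := by
    have hA := ((hP1 (2*gamma') (-(gamma'*(1+rho+2*beta))) 0).const_mul c0).mul (hDd 0)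
    have hB := ((hNd 0).const_mul c0).mul (hP3 (4*1) (3*(-e1)) (2*e2) (-e3) 0)
    have := hA.sub hB
    exact this.congr_deriv (by ring)
  have hDsq : HasDerivAt (fun x => (Df x)^2) ((2:ℕ) * Df 0 ^ 1 * (4*1*0^3 + 3*(-e1)*0^2 + 2*e2*0 + (-e3))) 0 := by
    simpa [Pi.pow_def] using (hDd 0).pow 2
  have hg0 : HasDerivAt g _ 0 := hF.div hDsq (pow_ne_zero 2 hD0)
  have hd2 : deriv g 0 = _ := hg0.deriv
  rw [hd2eq, hd2, hd1]
  -- now pure algebra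
  subst hpi1 hgamma'
  constructor
  · simp only [hgdef, hNfdef, hDfdef, he1, he2, he3, he4, hc0, hs]
    field_simp
    ring
  · simp only [hgdef, hNfdef, hDfdef, he1, he2, he3, he4, hc0, hs]
    field_simp
    ring
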